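/- Let E be a countable set, let ν : E → [0,∞) satisfy 0 < ν(E) := ∑_{x∈E} ν(x) ≤ 1, and let P : E×E → [0,∞) be symmetric (P(x,y) = P(y,x)) with ∑_{y∈E} P(x,y) ≤ 1 for every x ∈ E. Let F ⊆ E, let δ ∈ [0,1] be defined by ν(F) = (1−δ)·ν(E), and let η ≥ 0 satisfy ∑_{y∈F} P(x,y) ≤ η for every x ∈ F. Then ∑_{x,y∈E} √(ν(x))·√(ν(y))·P(x,y) ≤ ν(E)·(η + 2√δ). -/

import Mathlib

open scoped ENNReal

private lemma two_mul_mul_le_sq_add_sq (u v : ℝ≥0∞) : 2 * (u * v) ≤ u ^ 2 + v ^ 2 := by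
  rcases le_total u v with h | h
  · obtain ⟨d, rfl⟩ := exists_add_of_le h
    calc 2 * (u * (u + d)) = u ^ 2 + (u ^ 2 + 2 * (u * d)) := by ring
    _ ≤ u ^ 2 + (u ^ 2 + 2 * (u * d) + d ^ 2) := add_le_add_right le_self_add _
    _ = u ^ 2 + (u + d) ^ 2 := by ring
  · obtain ⟨d, rfl⟩ := exists_add_of_le h
    calc 2 * ((v + d) * v) = (v ^ 2 + 2 * (v * d)) + v ^ 2 := by ring
    _ ≤ (v ^ 2 + 2 * (v * d) + d ^ 2) + v ^ 2 := add_le_add_left le_self_add _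
    _ = (v + d) ^ 2 + v ^ 2 := by ring

private lemma sqrt_mul_le_half_add (u v : ℝ≥0∞) :
    u ^ (1 / 2 : ℝ) * v ^ (1 / 2 : ℝ) ≤ (u + v) / 2 := by
  have h1 : u ^ (1 / 2 : ℝ) * v ^ (1 / 2 : ℝ) = (u * v) ^ (1 / 2 : ℝ) :=
    (ENNReal.mul_rpow_of_nonneg _ _ (by norm_num)).symm
  have h3 : u * v * 4 ≤ (u + v) ^ 2 := by
    have h := two_mul_mul_le_sq_add_sq u v
    calc u * v * 4 = 2 * (u * v) + 2 * (u * v) := by ring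
    _ ≤ (u ^ 2 + v ^ 2) + 2 * (u * v) := add_le_add_left h _
    _ = (u + v) ^ 2 := by ring
  have h4 : ((u + v) / 2) ^ 2 = (u + v) ^ 2 / 4 := by
    rw [div_eq_mul_inv, mul_pow, div_eq_mul_inv, ← ENNReal.inv_pow]
    norm_num
  have h2 : u * v ≤ ((u + v) / 2) ^ 2 := by
    rw [h4, ENNReal.le_div_iff_mul_le (by norm_num) (by norm_num)]
    exact h3
  have h5 : (((u + v) / 2) ^ 2) ^ (1 / 2 : ℝ) = (u + v) / 2 := by
    rw [← ENNReal.rpow_natCast ((u + v) / 2) 2, ← ENNReal.rpow_mul]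
    norm_num
  rw [h1, ← h5]
  exact ENNReal.rpow_le_rpow h2 (by norm_num)

private lemma sqrt_mul_le_weighted (u v t : ℝ≥0∞) (ht0 : t ≠ 0) (htt : t ≠ ⊤) :
    u ^ (1 / 2 : ℝ) * v ^ (1 / 2 : ℝ) ≤ (t * u + t⁻¹ * v) / 2 := by
  have key : u ^ (1 / 2 : ℝ) * v ^ (1 / 2 : ℝ)
      = (t * u) ^ (1 / 2 : ℝ) * (t⁻¹ * v) ^ (1 / 2 : ℝ) := by
    rw [ENNReal.mul_rpow_of_nonneg _ _ (by norm_num : (0:ℝ) ≤ 1/2),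
      ENNReal.mul_rpow_of_nonneg _ _ (by norm_num : (0:ℝ) ≤ 1/2)]
    have h1 : t ^ (1 / 2 : ℝ) * t⁻¹ ^ (1 / 2 : ℝ) = 1 := by
      rw [← ENNReal.mul_rpow_of_nonneg _ _ (by norm_num : (0:ℝ) ≤ 1/2),
        ENNReal.mul_inv_cancel ht0 htt, ENNReal.one_rpow]
    calc u ^ (1 / 2 : ℝ) * v ^ (1 / 2 : ℝ)
        = (t ^ (1 / 2 : ℝ) * t⁻¹ ^ (1 / 2 : ℝ)) * (u ^ (1 / 2 : ℝ) * v ^ (1 / 2 : ℝ)) := by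
          rw [h1, one_mul]
    _ = t ^ (1 / 2 : ℝ) * u ^ (1 / 2 : ℝ) * (t⁻¹ ^ (1 / 2 : ℝ) * v ^ (1 / 2 : ℝ)) := by ring
  rw [key]
  exact sqrt_mul_le_half_add _ _

/-- **Lemma (singularity bound).**
Let `E` be a countable set endowed with a nonzero sub-probability measure `ν` and let
`P` be a symmetric sub-transition matrix on `E`.  Let `F ⊆ E`, let `δ ∈ [0,1]` be
defined by `ν(F) = (1-δ)·ν(E)`, and let `η` bound `∑_{y∈F} P(x,y)` for every `x ∈ F`.
Then `∑_{x,y∈E} √(ν(x))·√(ν(y))·P(x,y) ≤ ν(E)·(η + 2√δ)`.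
(All series have nonnegative terms and are interpreted in `[0,∞]`; square roots are
`(·)^(1/2)`.) -/
theorem singularity_bound {E : Type*} [Countable E]
    (ν : E → ℝ≥0∞) (P : E → E → ℝ≥0∞)
    (hν_pos : 0 < ∑' x, ν x) (hν_le : (∑' x, ν x) ≤ 1)
    (hP_symm : ∀ x y, P x y = P y x) (hP_row : ∀ x, (∑' y, P x y) ≤ 1)
    (F : Set E) (δ : ℝ≥0∞) (hδ_le : δ ≤ 1)
    (hF : (∑' x : F, ν x) = (1 - δ) * ∑' x, ν x)
    (η : ℝ≥0∞) (hη : ∀ x ∈ F, (∑' y : F, P x y) ≤ η) :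
    (∑' x, ∑' y, ν x ^ (1 / 2 : ℝ) * ν y ^ (1 / 2 : ℝ) * P x y)
      ≤ (∑' x, ν x) * (η + 2 * δ ^ (1 / 2 : ℝ)) := by
  classical
  set g : E → E → ℝ≥0∞ := fun x y => ν x ^ (1 / 2 : ℝ) * ν y ^ (1 / 2 : ℝ) * P x y with hg
  have hgoal : (∑' x, ∑' y, ν x ^ (1 / 2 : ℝ) * ν y ^ (1 / 2 : ℝ) * P x y)
      = ∑' x, ∑' y, g x y := by simp only [hg]
  rw [hgoal]
  have hA_top : (∑' x, ν x) ≠ ⊤ := (hν_le.trans_lt ENNReal.one_lt_top).ne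
  -- subtype sums are dominated by full sums
  have hsub : ∀ (G : Set E) (f : E → ℝ≥0∞), (∑' x : G, f x) ≤ ∑' x, f x := by
    intro G f
    rw [tsum_subtype]
    exact ENNReal.tsum_le_tsum fun x => Set.indicator_le_self _ _ x
  -- symmetry of g
  have hg_symm : ∀ x y, g x y = g y x := by
    intro x y
    simp only [hg]
    rw [hP_symm x y]
    ring
  -- mass of the complement of F
  have hmass : (∑' y : ↥Fᶜ, ν ↑y) = δ * ∑' x, ν x := by
    have hsplit : (∑' x : F, ν ↑x) + (∑' x : ↥Fᶜ, ν ↑x) = ∑' x, ν x :=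
      Summable.tsum_add_tsum_compl ENNReal.summable ENNReal.summable
    rw [hF] at hsplit
    have h1 : (1 - δ) * (∑' x, ν x) + δ * (∑' x, ν x) = ∑' x, ν x := by
      rw [← add_mul, tsub_add_cancel_of_le hδ_le, one_mul]
    have hne : (1 - δ) * (∑' x, ν x) ≠ ⊤ :=
      ENNReal.mul_ne_top (ne_top_of_le_ne_top ENNReal.one_ne_top tsub_le_self) hA_top
    exact (ENNReal.add_right_inj hne).mp (hsplit.trans h1.symm)
  -- generic "column" bound
  have col_bound : ∀ (G : Set E) (t : ℝ≥0∞), t ≠ 0 → t ≠ ⊤ →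
      (∑' x, ∑' y : G, g x ↑y)
        ≤ (t * (∑' x, ν x) + t⁻¹ * ∑' y : G, ν ↑y) / 2 := by
    intro G t ht0 htt
    have step1 : (∑' x, ∑' y : G, g x ↑y)
        ≤ ∑' x, ∑' y : G, (t * ν x * P x ↑y + t⁻¹ * ν ↑y * P x ↑y) / 2 := by
      refine ENNReal.tsum_le_tsum fun x => ENNReal.tsum_le_tsum fun y => ?_
      simp only [hg]
      calc ν x ^ (1 / 2 : ℝ) * ν ↑y ^ (1 / 2 : ℝ) * P x ↑y
          ≤ ((t * ν x + t⁻¹ * ν ↑y) / 2) * P x ↑y :=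
            mul_le_mul_left (sqrt_mul_le_weighted _ _ t ht0 htt) _
      _ = (t * ν x * P x ↑y + t⁻¹ * ν ↑y * P x ↑y) / 2 := by
          rw [div_eq_mul_inv, div_eq_mul_inv]; ring
    refine step1.trans ?_
    have expand : (∑' x, ∑' y : G, (t * ν x * P x ↑y + t⁻¹ * ν ↑y * P x ↑y) / 2)
        = ((∑' x, ∑' y : G, t * ν x * P x ↑y)
            + ∑' x, ∑' y : G, t⁻¹ * ν ↑y * P x ↑y) / 2 := by
      simp only [div_eq_mul_inv, ENNReal.tsum_mul_right, ENNReal.tsum_add]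
    have hx : (∑' x, ∑' y : G, t * ν x * P x ↑y) ≤ t * ∑' x, ν x := by
      calc ∑' x, ∑' y : G, t * ν x * P x ↑y
          = ∑' x, (t * ν x) * ∑' y : G, P x ↑y := by
            refine tsum_congr fun x => ?_
            rw [← ENNReal.tsum_mul_left]
      _ ≤ ∑' x, (t * ν x) * 1 := ENNReal.tsum_le_tsum fun x =>
            mul_le_mul_right ((hsub G (P x)).trans (hP_row x)) _
      _ = t * ∑' x, ν x := by
            simp only [mul_one, mul_assoc]
            exact ENNReal.tsum_mul_left
    have hy : (∑' x, ∑' y : G, t⁻¹ * ν ↑y * P x ↑y) ≤ t⁻¹ * ∑' y : G, ν ↑y := by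
      rw [ENNReal.tsum_comm]
      calc ∑' (y : G), ∑' x, t⁻¹ * ν ↑y * P x ↑y
          = ∑' (y : G), (t⁻¹ * ν ↑y) * ∑' x, P ↑y x := by
            refine tsum_congr fun y => ?_
            rw [← ENNReal.tsum_mul_left]
            exact tsum_congr fun x => by rw [hP_symm x ↑y]
      _ ≤ ∑' (y : G), (t⁻¹ * ν ↑y) * 1 := ENNReal.tsum_le_tsum fun y =>
            mul_le_mul_right (hP_row ↑y) _
      _ = t⁻¹ * ∑' y : G, ν ↑y := by
            simp only [mul_one, mul_assoc]
            exact ENNReal.tsum_mul_left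
    rw [expand]
    exact ENNReal.div_le_div_right (add_le_add hx hy) 2
  -- the F×F block
  have hFF : (∑' x : F, ∑' y : F, g ↑x ↑y) ≤ η * ∑' x, ν x := by
    have step1 : (∑' x : F, ∑' y : F, g ↑x ↑y)
        ≤ ∑' x : F, ∑' y : F, (ν ↑x * P ↑x ↑y + ν ↑y * P ↑x ↑y) / 2 := by
      refine ENNReal.tsum_le_tsum fun x => ENNReal.tsum_le_tsum fun y => ?_
      simp only [hg]
      calc ν ↑x ^ (1 / 2 : ℝ) * ν ↑y ^ (1 / 2 : ℝ) * P ↑x ↑y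
          ≤ ((ν ↑x + ν ↑y) / 2) * P ↑x ↑y :=
            mul_le_mul_left (sqrt_mul_le_half_add _ _) _
      _ = (ν ↑x * P ↑x ↑y + ν ↑y * P ↑x ↑y) / 2 := by
          rw [div_eq_mul_inv, div_eq_mul_inv]; ring
    refine step1.trans ?_
    have expand : (∑' x : F, ∑' y : F, (ν ↑x * P ↑x ↑y + ν ↑y * P ↑x ↑y) / 2)
        = ((∑' x : F, ∑' y : F, ν ↑x * P ↑x ↑y)
            + ∑' x : F, ∑' y : F, ν ↑y * P ↑x ↑y) / 2 := by
      simp only [div_eq_mul_inv, ENNReal.tsum_mul_right, ENNReal.tsum_add]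
    have h1 : (∑' x : F, ∑' y : F, ν ↑x * P ↑x ↑y) ≤ η * ∑' x, ν x := by
      calc ∑' x : F, ∑' y : F, ν ↑x * P ↑x ↑y
          = ∑' x : F, ν ↑x * ∑' y : F, P ↑x ↑y :=
            tsum_congr fun x => ENNReal.tsum_mul_left
      _ ≤ ∑' x : F, ν ↑x * η := ENNReal.tsum_le_tsum fun x =>
            mul_le_mul_right (hη ↑x x.2) _
      _ = η * ∑' x : F, ν ↑x := by rw [ENNReal.tsum_mul_right, mul_comm]
      _ ≤ η * ∑' x, ν x := mul_le_mul_right (hsub F ν) _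
    have h2 : (∑' x : F, ∑' y : F, ν ↑y * P ↑x ↑y) ≤ η * ∑' x, ν x := by
      rw [ENNReal.tsum_comm]
      calc ∑' (y : F), ∑' (x : F), ν ↑y * P ↑x ↑y
          = ∑' (y : F), ν ↑y * ∑' (x : F), P ↑y ↑x := by
            refine tsum_congr fun y => ?_
            rw [← ENNReal.tsum_mul_left]
            exact tsum_congr fun x => by rw [hP_symm ↑x ↑y]
      _ ≤ ∑' (y : F), ν ↑y * η := ENNReal.tsum_le_tsum fun y =>
            mul_le_mul_right (hη ↑y y.2) _
      _ = η * ∑' y : F, ν ↑y := by rw [ENNReal.tsum_mul_right, mul_comm]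
      _ ≤ η * ∑' x, ν x := mul_le_mul_right (hsub F ν) _
    rw [expand]
    calc ((∑' x : F, ∑' y : F, ν ↑x * P ↑x ↑y)
            + ∑' x : F, ∑' y : F, ν ↑y * P ↑x ↑y) / 2
        ≤ (η * (∑' x, ν x) + η * ∑' x, ν x) / 2 :=
          ENNReal.div_le_div_right (add_le_add h1 h2) 2
    _ = η * ∑' x, ν x := by rw [ENNReal.add_div, ENNReal.add_halves]
  -- column bound specialised to Fᶜ
  have hcol : (∑' x, ∑' y : ↥Fᶜ, g x ↑y) ≤ δ ^ (1 / 2 : ℝ) * ∑' x, ν x := by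
    rcases eq_or_ne δ 0 with hδ0 | hδ0
    · have hz : ∀ y : ↥Fᶜ, ν ↑y = 0 := by
        apply ENNReal.tsum_eq_zero.mp
        rw [hmass, hδ0, zero_mul]
      have hzero : (∑' x, ∑' y : ↥Fᶜ, g x ↑y) = 0 := by
        apply ENNReal.tsum_eq_zero.mpr
        intro x
        apply ENNReal.tsum_eq_zero.mpr
        intro y
        simp only [hg]
        rw [hz y, ENNReal.zero_rpow_of_pos (by norm_num : (0:ℝ) < 1/2)]
        simp
      rw [hzero]
      exact zero_le
    · have hδtop : δ ≠ ⊤ := (hδ_le.trans_lt ENNReal.one_lt_top).ne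
      have ht0 : δ ^ (1 / 2 : ℝ) ≠ 0 := by
        simp [ENNReal.rpow_eq_zero_iff, hδ0, hδtop]
      have htt : δ ^ (1 / 2 : ℝ) ≠ ⊤ :=
        ((ENNReal.rpow_le_one hδ_le (by norm_num)).trans_lt ENNReal.one_lt_top).ne
      have hb := col_bound Fᶜ (δ ^ (1 / 2 : ℝ)) ht0 htt
      rw [hmass] at hb
      refine hb.trans ?_
      have hinv : (δ ^ (1 / 2 : ℝ))⁻¹ * (δ * ∑' x, ν x)
          = δ ^ (1 / 2 : ℝ) * ∑' x, ν x := by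
        rw [← ENNReal.rpow_neg]
        calc δ ^ (-(1/2) : ℝ) * (δ * ∑' x, ν x)
            = (δ ^ (-(1/2) : ℝ) * δ ^ (1 : ℝ)) * ∑' x, ν x := by
              rw [ENNReal.rpow_one]; ring
        _ = δ ^ (1 / 2 : ℝ) * ∑' x, ν x := by
              rw [← ENNReal.rpow_add _ _ hδ0 hδtop]; norm_num
      rw [hinv, ENNReal.add_div, ENNReal.add_halves]
  -- decomposition of the full double sum
  have hdecomp : (∑' x, ∑' y, g x y)
      = ((∑' x : F, ∑' y : F, g ↑x ↑y) + ∑' x : ↥Fᶜ, ∑' y : F, g ↑x ↑y)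
        + ∑' x, ∑' y : ↥Fᶜ, g x ↑y := by
    calc ∑' x, ∑' y, g x y
        = ∑' x, ((∑' y : F, g x ↑y) + ∑' y : ↥Fᶜ, g x ↑y) :=
          tsum_congr fun x =>
            (Summable.tsum_add_tsum_compl ENNReal.summable ENNReal.summable).symm
    _ = (∑' x, ∑' y : F, g x ↑y) + ∑' x, ∑' y : ↥Fᶜ, g x ↑y := ENNReal.tsum_add
    _ = ((∑' x : F, ∑' y : F, g ↑x ↑y) + ∑' x : ↥Fᶜ, ∑' y : F, g ↑x ↑y)
          + ∑' x, ∑' y : ↥Fᶜ, g x ↑y := by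
        rw [← Summable.tsum_add_tsum_compl (s := F) (f := fun x => ∑' y : F, g x ↑y)
          ENNReal.summable ENNReal.summable]
  -- the Fᶜ×F block is dominated by the E×Fᶜ block
  have hRow : (∑' x : ↥Fᶜ, ∑' y : F, g ↑x ↑y) ≤ ∑' x, ∑' y : ↥Fᶜ, g x ↑y := by
    calc ∑' x : ↥Fᶜ, ∑' y : F, g ↑x ↑y
        ≤ ∑' x : ↥Fᶜ, ∑' y, g ↑x y := ENNReal.tsum_le_tsum fun x => hsub F (g ↑x)
    _ = ∑' y, ∑' x : ↥Fᶜ, g ↑x y := ENNReal.tsum_comm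
    _ = ∑' y, ∑' x : ↥Fᶜ, g y ↑x :=
        tsum_congr fun y => tsum_congr fun x => hg_symm ↑x y
  -- put everything together
  calc ∑' x, ∑' y, g x y
      = ((∑' x : F, ∑' y : F, g ↑x ↑y) + ∑' x : ↥Fᶜ, ∑' y : F, g ↑x ↑y)
        + ∑' x, ∑' y : ↥Fᶜ, g x ↑y := hdecomp
  _ ≤ (η * (∑' x, ν x) + δ ^ (1 / 2 : ℝ) * ∑' x, ν x)
        + δ ^ (1 / 2 : ℝ) * ∑' x, ν x :=
      add_le_add (add_le_add hFF (hRow.trans hcol)) hcol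
  _ = (∑' x, ν x) * (η + 2 * δ ^ (1 / 2 : ℝ)) := by ring
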